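/- Suppose (R^{(r)})_{r≥0} is a sequence of multilinear forms, R^{(r)} : (ℝ^{n+2})^{4+r} → ℝ written R_{IJKL,M₁⋯M_r}, which for every r ≥ 0 satisfies: (a) R_{IJKL,M₁⋯M_r} is antisymmetric in I,J, antisymmetric in K,L, and symmetric in M₁,…,M_r; (b) R_{I[JKL],M₁⋯M_r} = 0; (c) R_{IJ[KL,M₁]M₂⋯M_r} = 0; (d) R_{IJK0,M₁⋯M_r} = −Σ_{s=1}^{r} R_{IJKM_s,M₁⋯M̂_s⋯M_r} (interpreted as R_{IJK0} = 0 when r = 0); and (e) Σ_{I,K} h̃^{IK} R_{IJKL,M₁⋯M_r} = 0 (trace-freeness). Then the divergence and Laplace relations hold at the jet level: for every r ≥ 1, Σ_{L,M₁} h̃^{L M₁} R_{IJKL,M₁M₂⋯M_r} = 0, and for every r ≥ 2, Σ_{M₁,M₂} h̃^{M₁M₂} R_{IJKL,M₁M₂M₃⋯M_r} = 0. -/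
import Mathlib


open Matrix

noncomputable section

abbrev Idx (p q : ℕ) : Type := Unit ⊕ (Fin (p + q)) ⊕ Unit

/-- The diagonal quadratic form of signature `(p,q)` on `ℝ^n`, `n = p + q`. -/
def hMat (p q : ℕ) : Matrix (Fin (p + q)) (Fin (p + q)) ℝ :=
  Matrix.diagonal fun i => if (i : ℕ) < p then (1 : ℝ) else -1

/-- The quadratic form of signature `(p+1,q+1)` on `ℝ^{n+2}`, in block form
`[[0,0,1],[0,h,0],[1,0,0]]`. -/
def htMat (p q : ℕ) : Matrix (Idx p q) (Idx p q) ℝ :=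
  Matrix.of fun I J =>
    match I, J with
    | Sum.inl _, Sum.inr (Sum.inr _) => (1 : ℝ)
    | Sum.inr (Sum.inr _), Sum.inl _ => 1
    | Sum.inr (Sum.inl i), Sum.inr (Sum.inl j) => hMat p q i j
    | _, _ => 0

/-- The distinguished index `0`, corresponding to insertion of the basis
vector `e₀`. -/
def i0 (p q : ℕ) : Idx p q := Sum.inl ()


section Aux

lemma perm3_sum' (f : Equiv.Perm (Fin 3) → ℝ) :
    ∑ σ : Equiv.Perm (Fin 3), f σ =
      f 1 + f (Equiv.swap 0 1) + f (Equiv.swap 0 2) + f (Equiv.swap 1 2) +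
      f (Equiv.swap 0 1 * Equiv.swap 1 2) + f (Equiv.swap 1 2 * Equiv.swap 0 1) := by
  rw [show (Finset.univ : Finset (Equiv.Perm (Fin 3))) =
    {1, Equiv.swap 0 1, Equiv.swap 0 2, Equiv.swap 1 2,
     Equiv.swap 0 1 * Equiv.swap 1 2, Equiv.swap 1 2 * Equiv.swap 0 1} from by decide]
  rw [Finset.sum_insert (by decide), Finset.sum_insert (by decide),
      Finset.sum_insert (by decide), Finset.sum_insert (by decide),
      Finset.sum_insert (by decide), Finset.sum_singleton]
  ring

lemma alt3' (g : Fin 3 → Fin 3 → Fin 3 → ℝ)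
    (h : ∑ σ : Equiv.Perm (Fin 3),
      ((Equiv.Perm.sign σ : ℤ) : ℝ) * g (σ 0) (σ 1) (σ 2) = 0) :
    g 0 1 2 - g 1 0 2 - g 2 1 0 - g 0 2 1 + g 1 2 0 + g 2 0 1 = 0 := by
  rw [perm3_sum'] at h
  have s1 : ((Equiv.Perm.sign (1 : Equiv.Perm (Fin 3)) : ℤ) : ℝ) = 1 := by
    exact_mod_cast (by decide : ((Equiv.Perm.sign (1 : Equiv.Perm (Fin 3))) : ℤ) = 1)
  have s2 : ((Equiv.Perm.sign (Equiv.swap (0:Fin 3) 1) : ℤ) : ℝ) = -1 := by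
    exact_mod_cast (by decide : ((Equiv.Perm.sign (Equiv.swap (0:Fin 3) 1)) : ℤ) = -1)
  have s3 : ((Equiv.Perm.sign (Equiv.swap (0:Fin 3) 2) : ℤ) : ℝ) = -1 := by
    exact_mod_cast (by decide : ((Equiv.Perm.sign (Equiv.swap (0:Fin 3) 2)) : ℤ) = -1)
  have s4 : ((Equiv.Perm.sign (Equiv.swap (1:Fin 3) 2) : ℤ) : ℝ) = -1 := by
    exact_mod_cast (by decide : ((Equiv.Perm.sign (Equiv.swap (1:Fin 3) 2)) : ℤ) = -1)
  have s5 : ((Equiv.Perm.sign (Equiv.swap (0:Fin 3) 1 * Equiv.swap 1 2) : ℤ) : ℝ) = 1 := by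
    exact_mod_cast
      (by decide : ((Equiv.Perm.sign (Equiv.swap (0:Fin 3) 1 * Equiv.swap 1 2)) : ℤ) = 1)
  have s6 : ((Equiv.Perm.sign (Equiv.swap (1:Fin 3) 2 * Equiv.swap 0 1) : ℤ) : ℝ) = 1 := by
    exact_mod_cast
      (by decide : ((Equiv.Perm.sign (Equiv.swap (1:Fin 3) 2 * Equiv.swap 0 1)) : ℤ) = 1)
  rw [s1, s2, s3, s4, s5, s6] at h
  simp only [Equiv.Perm.mul_apply,
      show ((1 : Equiv.Perm (Fin 3)) 0) = 0 from by decide,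
      show ((1 : Equiv.Perm (Fin 3)) 1) = 1 from by decide,
      show ((1 : Equiv.Perm (Fin 3)) 2) = 2 from by decide,
      show ((Equiv.swap (0:Fin 3) 1) 0) = 1 from by decide,
      show ((Equiv.swap (0:Fin 3) 1) 1) = 0 from by decide,
      show ((Equiv.swap (0:Fin 3) 1) 2) = 2 from by decide,
      show ((Equiv.swap (0:Fin 3) 2) 0) = 2 from by decide,
      show ((Equiv.swap (0:Fin 3) 2) 1) = 1 from by decide,
      show ((Equiv.swap (0:Fin 3) 2) 2) = 0 from by decide,
      show ((Equiv.swap (1:Fin 3) 2) 0) = 0 from by decide,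
      show ((Equiv.swap (1:Fin 3) 2) 1) = 2 from by decide,
      show ((Equiv.swap (1:Fin 3) 2) 2) = 1 from by decide] at h
  linarith

end Aux
/-- For a list of curvature-type tensors `R^{(r)}` satisfying the curvature
symmetries (a), the Bianchi identities (b), (c), relation (d), and
trace-freeness (e) `Σ h̃^{IK} R_{IJKL,M₁⋯M_r} = 0`, the divergence and Laplace
relations hold at the jet level:
`Σ h̃^{LM₁} R_{IJKL,M₁M₂⋯M_r} = 0` for `r ≥ 1`, and
`Σ h̃^{M₁M₂} R_{IJKL,M₁M₂M₃⋯M_r} = 0` for `r ≥ 2`. -/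
theorem statement19 (p q : ℕ) (hn : 3 ≤ p + q)
    (R : (r : ℕ) → Idx p q → Idx p q → Idx p q → Idx p q →
      (Fin r → Idx p q) → ℝ)
    (hanti1 : ∀ r I J K L (M : Fin r → Idx p q),
      R r I J K L M = -R r J I K L M)
    (hanti2 : ∀ r I J K L (M : Fin r → Idx p q),
      R r I J K L M = -R r I J L K M)
    (hsymmM : ∀ r I J K L (M : Fin r → Idx p q) (σ : Equiv.Perm (Fin r)),
      R r I J K L (M ∘ σ) = R r I J K L M)
    (hbianchi1 : ∀ r I J K L (M : Fin r → Idx p q),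
      ∑ σ : Equiv.Perm (Fin 3),
        ((Equiv.Perm.sign σ : ℤ) : ℝ) *
          R r I (![J, K, L] (σ 0)) (![J, K, L] (σ 1)) (![J, K, L] (σ 2)) M = 0)
    (hbianchi2 : ∀ r I J K L (M : Fin (r + 1) → Idx p q),
      ∑ σ : Equiv.Perm (Fin 3),
        ((Equiv.Perm.sign σ : ℤ) : ℝ) *
          R (r + 1) I J (![K, L, M 0] (σ 0)) (![K, L, M 0] (σ 1))
            (Function.update M 0 (![K, L, M 0] (σ 2))) = 0)
    (hd0 : ∀ I J K (M : Fin 0 → Idx p q), R 0 I J K (i0 p q) M = 0)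
    (hd : ∀ r I J K (M : Fin (r + 1) → Idx p q),
      R (r + 1) I J K (i0 p q) M
        = -∑ s : Fin (r + 1), R r I J K (M s) (fun i => M (s.succAbove i)))
    (htrfree : ∀ r J L (M : Fin r → Idx p q),
      ∑ I, ∑ K, (htMat p q)⁻¹ I K * R r I J K L M = 0) :
    (∀ r I J K (M : Fin r → Idx p q),
      ∑ L, ∑ M₁, (htMat p q)⁻¹ L M₁ * R (r + 1) I J K L (Fin.cons M₁ M) = 0) ∧
    (∀ r I J K L (M : Fin r → Idx p q),
      ∑ M₁, ∑ M₂, (htMat p q)⁻¹ M₁ M₂ *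
        R (r + 2) I J K L (Fin.cons M₁ (Fin.cons M₂ M)) = 0) := by
  set G := (htMat p q)⁻¹ with hG
  -- first Bianchi, cyclic form
  have cyc1 : ∀ r I J K L (M : Fin r → Idx p q),
      R r I J K L M + R r I K L J M + R r I L J K M = 0 := by
    intro r I J K L M
    have h := alt3' (fun a b c => R r I (![J,K,L] a) (![J,K,L] b) (![J,K,L] c) M)
      (hbianchi1 r I J K L M)
    simp only [show ![J,K,L] (0:Fin 3) = J from rfl, show ![J,K,L] (1:Fin 3) = K from rfl,
      show ![J,K,L] (2:Fin 3) = L from rfl] at h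
    linarith [hanti2 r I K J L M, hanti2 r I L K J M, hanti2 r I J K L M]
  -- pair symmetry
  have pairSym : ∀ r I J K L (M : Fin r → Idx p q),
      R r I J K L M = R r K L I J M := by
    intro r I J K L M
    linarith [cyc1 r I J K L M, cyc1 r J K L I M, cyc1 r K L I J M, cyc1 r L I J K M,
      hanti1 r I J K L M, hanti2 r I J K L M,
      hanti1 r I K L J M, hanti2 r I K L J M,
      hanti1 r I L J K M, hanti2 r I L J K M,
      hanti1 r J K L I M, hanti2 r J K L I M,
      hanti1 r J L I K M, hanti2 r J L I K M,
      hanti1 r J I K L M, hanti2 r J I K L M,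
      hanti1 r K L I J M, hanti2 r K L I J M,
      hanti1 r K I J L M, hanti2 r K I J L M,
      hanti1 r K J L I M, hanti2 r K J L I M,
      hanti1 r L I J K M, hanti2 r L I J K M,
      hanti1 r L J K I M, hanti2 r L J K I M,
      hanti1 r L K I J M, hanti2 r L K I J M,
      hanti2 r J I K L M, hanti2 r K I L J M, hanti2 r L I K J M,
      hanti2 r I K J L M, hanti2 r I L K J M, hanti2 r J K I L M,
      hanti2 r K J I L M, hanti2 r L J I K M, hanti2 r L K J I M,
      hanti2 r J L K I M, hanti2 r K L J I M, hanti2 r I J L K M]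
  -- second Bianchi, cyclic form
  have cyc2 : ∀ r I J K L (M : Fin (r+1) → Idx p q),
      R (r+1) I J K L M + R (r+1) I J L (M 0) (Function.update M 0 K)
        + R (r+1) I J (M 0) K (Function.update M 0 L) = 0 := by
    intro r I J K L M
    have h := alt3' (fun a b c => R (r+1) I J (![K, L, M 0] a) (![K, L, M 0] b)
        (Function.update M 0 (![K, L, M 0] c)))
      (hbianchi2 r I J K L M)
    simp only [show ∀ (x y z : Idx p q), ![x,y,z] (0:Fin 3) = x from fun _ _ _ => rfl,
      show ∀ (x y z : Idx p q), ![x,y,z] (1:Fin 3) = y from fun _ _ _ => rfl,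
      show ∀ (x y z : Idx p q), ![x,y,z] (2:Fin 3) = z from fun _ _ _ => rfl,
      Function.update_eq_self] at h
    linarith [hanti2 (r+1) I J L K M,
      hanti2 (r+1) I J (M 0) L (Function.update M 0 K),
      hanti2 (r+1) I J K (M 0) (Function.update M 0 L)]
  -- swapping the two first derivative slots
  have swapcons : ∀ (r : ℕ) I J K L (a b : Idx p q) (M : Fin r → Idx p q),
      R (r+2) I J K L (Fin.cons a (Fin.cons b M)) =
        R (r+2) I J K L (Fin.cons b (Fin.cons a M)) := by
    intro r I J K L a b M
    have hc : (Fin.cons b (Fin.cons a M) : Fin (r+2) → Idx p q) ∘ (Equiv.swap 0 1)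
        = Fin.cons a (Fin.cons b M) := by
      funext i
      refine Fin.cases ?_ (fun j => ?_) i
      · simp only [Function.comp_apply, Equiv.swap_apply_left, Fin.cons_zero]
        rw [← Fin.succ_zero_eq_one, Fin.cons_succ, Fin.cons_zero]
      · refine Fin.cases ?_ (fun k => ?_) j
        · simp only [Function.comp_apply, Fin.succ_zero_eq_one, Equiv.swap_apply_right]
          rw [Fin.cons_zero, ← Fin.succ_zero_eq_one, Fin.cons_succ, Fin.cons_zero]
        · have h0 : (k.succ.succ : Fin (r+2)) ≠ 0 := Fin.succ_ne_zero _
          have h1 : (k.succ.succ : Fin (r+2)) ≠ 1 := by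
            rw [← Fin.succ_zero_eq_one]
            exact fun hcon => Fin.succ_ne_zero k (Fin.succ_injective _ hcon)
          simp only [Function.comp_apply, Equiv.swap_apply_of_ne_of_ne h0 h1, Fin.cons_succ]
    rw [← hsymmM (r+2) I J K L (Fin.cons b (Fin.cons a M)) (Equiv.swap 0 1), hc]
  -- mixed contraction vanishes
  have star : ∀ r (J A B : Idx p q) (N : Fin r → Idx p q),
      ∑ I, ∑ K, G I K * R (r+1) I J A B (Fin.cons K N) = 0 := by
    intro r J A B N
    have key : ∀ (I K : Idx p q), G I K * R (r+1) I J A B (Fin.cons K N) =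
        -(G I K * R (r+1) I J K A (Fin.cons B N))
          + (G I K * R (r+1) I J K B (Fin.cons A N)) := by
      intro I K
      have e := cyc2 r I J K A (Fin.cons B N)
      simp only [Fin.cons_zero, Fin.update_cons_zero] at e
      have a2 := hanti2 (r+1) I J B K (Fin.cons A N)
      rw [show R (r+1) I J A B (Fin.cons K N) =
        -R (r+1) I J K A (Fin.cons B N) + R (r+1) I J K B (Fin.cons A N) from by linarith]
      ring
    simp only [key, Finset.sum_add_distrib, Finset.sum_neg_distrib]
    rw [htrfree (r+1) J A (Fin.cons B N), htrfree (r+1) J B (Fin.cons A N)]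
    ring
  -- divergence
  have div : ∀ r I J K (M : Fin r → Idx p q),
      ∑ L, ∑ M₁, G L M₁ * R (r + 1) I J K L (Fin.cons M₁ M) = 0 := by
    intro r I J K M
    have key : ∀ (L M₁ : Idx p q), G L M₁ * R (r+1) I J K L (Fin.cons M₁ M) =
        -(G L M₁ * R (r+1) L K I J (Fin.cons M₁ M)) := by
      intro L M₁
      rw [pairSym (r+1) I J K L (Fin.cons M₁ M), hanti1 (r+1) K L I J (Fin.cons M₁ M)]
      ring
    simp only [key, Finset.sum_neg_distrib]
    rw [star r K I J M]
    ring
  refine ⟨div, ?_⟩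
  -- Laplace
  intro r I J K L M
  have key : ∀ (M₁ M₂ : Idx p q),
      G M₁ M₂ * R (r+2) I J K L (Fin.cons M₁ (Fin.cons M₂ M)) =
        -(G M₁ M₂ * R (r+2) I J L M₁ (Fin.cons M₂ (Fin.cons K M)))
          + (G M₁ M₂ * R (r+2) I J K M₁ (Fin.cons M₂ (Fin.cons L M))) := by
    intro M₁ M₂
    have e := cyc2 (r+1) I J K L (Fin.cons M₁ (Fin.cons M₂ M))
    simp only [Fin.cons_zero, Fin.update_cons_zero] at e
    have s1 := swapcons r I J L M₁ K M₂ M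
    have s2 := swapcons r I J (M₁) K L M₂ M
    have a2 := hanti2 (r+2) I J M₁ K (Fin.cons M₂ (Fin.cons L M))
    rw [show R (r+2) I J K L (Fin.cons M₁ (Fin.cons M₂ M)) =
        -R (r+2) I J L M₁ (Fin.cons M₂ (Fin.cons K M))
          + R (r+2) I J K M₁ (Fin.cons M₂ (Fin.cons L M)) from by linarith]
    ring
  simp only [key, Finset.sum_add_distrib, Finset.sum_neg_distrib]
  rw [div (r+1) I J L (Fin.cons K M), div (r+1) I J K (Fin.cons L M)]
  ring
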